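/- Let K_a(z,w) = 1/(1 - a·z·w̄ - (1-a)·(z·w̄)²) for a ∈ (0,1), fix r ∈ (0,1), and let γ_a(r) be the supremum of |f(0)| over unit-norm functions in the RKHS H_a vanishing at r and -r. Setting F(a) = 1 - (1-a)r⁴ and G(a) = a·r², one has K_a(r,r) = K_a(-r,-r) = 1/(F(a) - G(a)), K_a(r,-r) = 1/(F(a) + G(a)), and 1 - γ_a(r)² = (F(a)² - G(a)²)/F(a); in particular γ_a(r) → r² as a → 0⁺. -/

import Mathlib

open scoped InnerProductSpace

set_option maxHeartbeats 1000000 in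
/-- For the RKHS H_a on 𝔻 with kernel K_a(z,w) = 1/(1 - a z w̄ - (1-a)(z w̄)²), fixing
r ∈ (0,1) and letting γ_a(r) be the extremal value for vanishing at ±r, with
F(a) = 1-(1-a)r⁴ and G(a) = a r²: the kernel values are 1/(F∓G) as indicated,
1 - γ_a(r)² = (F(a)² - G(a)²)/F(a), and γ_a(r) → r² as a → 0⁺. -/
theorem stmt16 {H : ℝ → Type*} [∀ a, NormedAddCommGroup (H a)]
    [∀ a, InnerProductSpace ℂ (H a)] [∀ a, CompleteSpace (H a)]
    (ev : ∀ a, H a →ₗ[ℂ] (ℂ → ℂ)) (k : ∀ a, ℂ → H a)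
    (hrep : ∀ (a : ℝ) (f : H a) (z : ℂ), ‖z‖ < 1 → ev a f z = ⟪k a z, f⟫_ℂ)
    (hker : ∀ a ∈ Set.Ioo (0 : ℝ) 1, ∀ z w : ℂ, ‖z‖ < 1 → ‖w‖ < 1 →
      ev a (k a w) z =
        1 / (1 - (a : ℂ) * (z * (starRingEnd ℂ) w) - (1 - (a : ℂ)) * (z * (starRingEnd ℂ) w) ^ 2))
    (hspan : ∀ a : ℝ, (Submodule.span ℂ (k a '' Metric.ball 0 1)).topologicalClosure = ⊤)
    (r : ℝ) (hr : r ∈ Set.Ioo (0 : ℝ) 1)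
    (γ : ℝ → ℝ)
    (hγ : ∀ a : ℝ, γ a = sSup {x : ℝ | ∃ f : H a, ‖f‖ ≤ 1 ∧
      ev a f (r : ℂ) = 0 ∧ ev a f (-(r : ℂ)) = 0 ∧ x = ‖ev a f 0‖}) :
    (∀ a ∈ Set.Ioo (0 : ℝ) 1,
      ev a (k a (r : ℂ)) (r : ℂ) = (((1 - (1 - a) * r ^ 4) - a * r ^ 2 : ℝ) : ℂ)⁻¹ ∧
      ev a (k a (-(r : ℂ))) (-(r : ℂ)) = (((1 - (1 - a) * r ^ 4) - a * r ^ 2 : ℝ) : ℂ)⁻¹ ∧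
      ev a (k a (-(r : ℂ))) (r : ℂ) = (((1 - (1 - a) * r ^ 4) + a * r ^ 2 : ℝ) : ℂ)⁻¹ ∧
      1 - γ a ^ 2 =
        ((1 - (1 - a) * r ^ 4) ^ 2 - (a * r ^ 2) ^ 2) / (1 - (1 - a) * r ^ 4)) ∧
    Filter.Tendsto γ (nhdsWithin 0 (Set.Ioo 0 1)) (nhds (r ^ 2)) := by
  obtain ⟨hr0, hr1⟩ := hr
  have habs_r : ‖(r : ℂ)‖ < 1 := by
    rw [Complex.norm_real, Real.norm_eq_abs]; rwa [abs_of_pos hr0]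
  have habs_nr : ‖(-(r : ℂ))‖ < 1 := by simpa using habs_r
  have habs_0 : ‖(0 : ℂ)‖ < 1 := by simp
  set φ : ℝ → ℝ := fun a =>
    Real.sqrt (((1 - (1 - a) * r ^ 4) - (1 - (1 - a) * r ^ 4) ^ 2 + (a * r ^ 2) ^ 2) /
      (1 - (1 - a) * r ^ 4)) with hφdef
  have key : ∀ a ∈ Set.Ioo (0 : ℝ) 1,
      ev a (k a (r : ℂ)) (r : ℂ) = (((1 - (1 - a) * r ^ 4) - a * r ^ 2 : ℝ) : ℂ)⁻¹ ∧
      ev a (k a (-(r : ℂ))) (-(r : ℂ)) = (((1 - (1 - a) * r ^ 4) - a * r ^ 2 : ℝ) : ℂ)⁻¹ ∧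
      ev a (k a (-(r : ℂ))) (r : ℂ) = (((1 - (1 - a) * r ^ 4) + a * r ^ 2 : ℝ) : ℂ)⁻¹ ∧
      (1 - γ a ^ 2 =
        ((1 - (1 - a) * r ^ 4) ^ 2 - (a * r ^ 2) ^ 2) / (1 - (1 - a) * r ^ 4)) ∧
      γ a = φ a := by
    intro a ha
    obtain ⟨ha0, ha1⟩ := ha
    set F : ℝ := 1 - (1 - a) * r ^ 4 with hFdef
    set G : ℝ := a * r ^ 2 with hGdef
    have hr2lt : r ^ 2 < 1 := by nlinarith
    have hr4lt : r ^ 4 < 1 := by nlinarith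
    have hr2pos : (0 : ℝ) < r ^ 2 := by positivity
    have hF : 0 < F := by rw [hFdef]; nlinarith
    have hFmG : 0 < F - G := by
      have h1 : (0 : ℝ) < 1 - r ^ 2 := by linarith
      have h2 : (0 : ℝ) < 1 + r ^ 2 - a * r ^ 2 := by nlinarith
      have := mul_pos h1 h2
      rw [hFdef, hGdef]; nlinarith
    have hFpG : 0 < F + G := by rw [hFdef, hGdef]; nlinarith
    have hFne : F ≠ 0 := ne_of_gt hF
    have hFmGne : F - G ≠ 0 := ne_of_gt hFmG
    have hFpGne : F + G ≠ 0 := ne_of_gt hFpG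
    -- kernel values
    have h11 : ev a (k a (r : ℂ)) (r : ℂ) = ((F - G : ℝ) : ℂ)⁻¹ := by
      rw [hker a ⟨ha0, ha1⟩ _ _ habs_r habs_r, Complex.conj_ofReal, one_div]
      congr 1
      rw [hFdef, hGdef]; push_cast; ring
    have h22 : ev a (k a (-(r : ℂ))) (-(r : ℂ)) = ((F - G : ℝ) : ℂ)⁻¹ := by
      rw [hker a ⟨ha0, ha1⟩ _ _ habs_nr habs_nr, map_neg, Complex.conj_ofReal, one_div]
      congr 1
      rw [hFdef, hGdef]; push_cast; ring
    have h12 : ev a (k a (-(r : ℂ))) (r : ℂ) = ((F + G : ℝ) : ℂ)⁻¹ := by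
      rw [hker a ⟨ha0, ha1⟩ _ _ habs_r habs_nr, map_neg, Complex.conj_ofReal, one_div]
      congr 1
      rw [hFdef, hGdef]; push_cast; ring
    have h21 : ev a (k a (r : ℂ)) (-(r : ℂ)) = ((F + G : ℝ) : ℂ)⁻¹ := by
      rw [hker a ⟨ha0, ha1⟩ _ _ habs_nr habs_r, Complex.conj_ofReal, one_div]
      congr 1
      rw [hFdef, hGdef]; push_cast; ring
    -- inner products among kernel functions
    set e0 : H a := k a 0 with he0
    set e1 : H a := k a (r : ℂ) with he1
    set e2 : H a := k a (-(r : ℂ)) with he2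
    clear_value e0 e1 e2
    have i00 : ⟪e0, e0⟫_ℂ = 1 := by
      rw [he0, ← hrep a _ _ habs_0, hker a ⟨ha0, ha1⟩ _ _ habs_0 habs_0]; simp
    have i01 : ⟪e0, e1⟫_ℂ = 1 := by
      rw [he0, he1, ← hrep a _ _ habs_0, hker a ⟨ha0, ha1⟩ _ _ habs_0 habs_r]; simp
    have i02 : ⟪e0, e2⟫_ℂ = 1 := by
      rw [he0, he2, ← hrep a _ _ habs_0, hker a ⟨ha0, ha1⟩ _ _ habs_0 habs_nr]; simp
    have i10 : ⟪e1, e0⟫_ℂ = 1 := by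
      rw [he0, he1, ← hrep a _ _ habs_r, hker a ⟨ha0, ha1⟩ _ _ habs_r habs_0]; simp
    have i20 : ⟪e2, e0⟫_ℂ = 1 := by
      rw [he0, he2, ← hrep a _ _ habs_nr, hker a ⟨ha0, ha1⟩ _ _ habs_nr habs_0]; simp
    have i11 : ⟪e1, e1⟫_ℂ = ((F - G : ℝ) : ℂ)⁻¹ := by
      rw [he1, ← hrep a _ _ habs_r, ← he1]; exact h11
    have i22 : ⟪e2, e2⟫_ℂ = ((F - G : ℝ) : ℂ)⁻¹ := by
      rw [he2, ← hrep a _ _ habs_nr, ← he2]; exact h22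
    have i12 : ⟪e1, e2⟫_ℂ = ((F + G : ℝ) : ℂ)⁻¹ := by
      rw [he1, he2, ← hrep a _ _ habs_r, ← he2]; exact h12
    have i21 : ⟪e2, e1⟫_ℂ = ((F + G : ℝ) : ℂ)⁻¹ := by
      rw [he1, he2, ← hrep a _ _ habs_nr, ← he1]; exact h21
    -- extremal function
    set c : ℝ := (F ^ 2 - G ^ 2) / (2 * F) with hcdef
    clear_value c
    set g : H a := e0 - (c : ℂ) • (e1 + e2) with hgdef
    clear_value g
    have hg1 : ⟪e1, g⟫_ℂ = 0 := by
      rw [hgdef]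
      rw [inner_sub_right, inner_smul_right, inner_add_right, i10, i11, i12]
      have hre : 1 - c * ((F - G)⁻¹ + (F + G)⁻¹) = 0 := by
        rw [hcdef]; field_simp; ring
      have : (1 : ℂ) - (c : ℂ) * (((F - G : ℝ) : ℂ)⁻¹ + ((F + G : ℝ) : ℂ)⁻¹) =
          ((1 - c * ((F - G)⁻¹ + (F + G)⁻¹) : ℝ) : ℂ) := by push_cast; ring
      rw [this, hre, Complex.ofReal_zero]
    have hg2 : ⟪e2, g⟫_ℂ = 0 := by
      rw [hgdef]
      rw [inner_sub_right, inner_smul_right, inner_add_right, i20, i21, i22]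
      have hre : 1 - c * ((F + G)⁻¹ + (F - G)⁻¹) = 0 := by
        rw [hcdef]; field_simp; ring
      have : (1 : ℂ) - (c : ℂ) * (((F + G : ℝ) : ℂ)⁻¹ + ((F - G : ℝ) : ℂ)⁻¹) =
          ((1 - c * ((F + G)⁻¹ + (F - G)⁻¹) : ℝ) : ℂ) := by push_cast; ring
      rw [this, hre, Complex.ofReal_zero]
    set s : ℝ := (F - F ^ 2 + G ^ 2) / F with hsdef
    clear_value s
    have hs12c : s = 1 - 2 * c := by rw [hsdef, hcdef]; field_simp; ring
    have hg0 : ⟪e0, g⟫_ℂ = (s : ℝ) := by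
      rw [hgdef]
      rw [inner_sub_right, inner_smul_right, inner_add_right, i00, i01, i02]
      rw [hs12c]; push_cast; ring
    have hgg : ⟪g, g⟫_ℂ = (s : ℝ) := by
      nth_rewrite 1 [hgdef]
      rw [inner_sub_left, inner_smul_left, inner_add_left, hg0, hg1, hg2]
      simp
    have hs_pos : 0 < s := by
      rw [hsdef]
      apply div_pos _ hF
      have h1 : 0 < 1 - F := by
        rw [hFdef]
        nlinarith [mul_pos (show (0:ℝ) < 1 - a by linarith) (show (0:ℝ) < r ^ 4 by positivity)]
      nlinarith [mul_pos hF h1, sq_nonneg G]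
    have hnormsq : ‖g‖ ^ 2 = s := by
      have h2 := inner_self_eq_norm_sq (𝕜 := ℂ) g
      rw [hgg] at h2
      simpa using h2.symm
    have hg_pos : 0 < ‖g‖ := by
      rcases (norm_nonneg g).lt_or_eq with h | h
      · exact h
      · exfalso
        rw [← h] at hnormsq
        norm_num at hnormsq
        linarith
    -- the supremum equals ‖g‖
    have hub : ∀ x ∈ {x : ℝ | ∃ f : H a, ‖f‖ ≤ 1 ∧
        ev a f (r : ℂ) = 0 ∧ ev a f (-(r : ℂ)) = 0 ∧ x = ‖ev a f 0‖},
        x ≤ ‖g‖ := by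
      rintro x ⟨f, hf1, hfr, hfnr, hx⟩
      have h1f : ⟪e1, f⟫_ℂ = 0 := by rw [he1, ← hrep a f _ habs_r]; exact hfr
      have h2f : ⟪e2, f⟫_ℂ = 0 := by rw [he2, ← hrep a f _ habs_nr]; exact hfnr
      have hf0 : ev a f 0 = ⟪g, f⟫_ℂ := by
        rw [hrep a f 0 habs_0, hgdef]
        rw [inner_sub_left, inner_smul_left, inner_add_left, h1f, h2f, he0]
        simp
      rw [hx, hf0]
      calc ‖⟪g, f⟫_ℂ‖ = ‖⟪g, f⟫_ℂ‖ := rfl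
        _ ≤ ‖g‖ * ‖f‖ := norm_inner_le_norm g f
        _ ≤ ‖g‖ * 1 := by
            exact mul_le_mul_of_nonneg_left hf1 (norm_nonneg g)
        _ = ‖g‖ := mul_one _
    have hmem : ‖g‖ ∈ {x : ℝ | ∃ f : H a, ‖f‖ ≤ 1 ∧
        ev a f (r : ℂ) = 0 ∧ ev a f (-(r : ℂ)) = 0 ∧ x = ‖ev a f 0‖} := by
      refine ⟨((‖g‖⁻¹ : ℝ) : ℂ) • g, ?_, ?_, ?_, ?_⟩
      · rw [norm_smul]
        simp only [Complex.norm_real, Real.norm_eq_abs, abs_of_nonneg (inv_nonneg.mpr (norm_nonneg g))]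
        rw [inv_mul_cancel₀ (ne_of_gt hg_pos)]
      · rw [hrep a _ _ habs_r, ← he1, inner_smul_right, hg1, mul_zero]
      · rw [hrep a _ _ habs_nr, ← he2, inner_smul_right, hg2, mul_zero]
      · rw [hrep a _ _ habs_0, ← he0, inner_smul_right, hg0]
        rw [← Complex.ofReal_mul, Complex.norm_real, Real.norm_eq_abs]
        rw [← hnormsq]
        rw [abs_of_nonneg (by positivity)]
        field_simp
    have hγa : γ a = ‖g‖ := by
      rw [hγ a]
      apply le_antisymm
      · exact Real.sSup_le hub (norm_nonneg g)
      · exact le_csSup ⟨‖g‖, hub⟩ hmem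
    have hγsq : γ a ^ 2 = s := by rw [hγa]; exact hnormsq
    refine ⟨h11, h22, h12, ?_, ?_⟩
    · rw [hγsq, hsdef]
      field_simp
      ring
    · rw [hγa]
      simp only [hφdef]
      rw [← hFdef, ← hGdef, ← hsdef, ← hnormsq, Real.sqrt_sq (norm_nonneg g)]
  constructor
  · intro a ha
    exact ⟨(key a ha).1, (key a ha).2.1, (key a ha).2.2.1, (key a ha).2.2.2.1⟩
  · have hr4 : (0 : ℝ) < 1 - r ^ 4 := by
      have h4 : r ^ 4 < 1 := pow_lt_one₀ hr0.le hr1 (by norm_num)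
      linarith
    have hφ0 : φ 0 = r ^ 2 := by
      rw [hφdef]
      have : ((1 - (1 - (0:ℝ)) * r ^ 4) - (1 - (1 - (0:ℝ)) * r ^ 4) ^ 2 + ((0:ℝ) * r ^ 2) ^ 2) /
          (1 - (1 - (0:ℝ)) * r ^ 4) = r ^ 4 := by
        field_simp [hr4.ne']
        ring
      simp only [this]
      rw [show (r:ℝ) ^ 4 = (r ^ 2) ^ 2 by ring, Real.sqrt_sq (by positivity)]
    have hcont : ContinuousAt φ 0 := by
      apply Real.continuous_sqrt.continuousAt.comp
      apply ContinuousAt.div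
      · fun_prop
      · fun_prop
      · simpa using ne_of_gt hr4
    have htend : Filter.Tendsto φ (nhdsWithin 0 (Set.Ioo 0 1)) (nhds (r ^ 2)) := by
      rw [← hφ0]
      exact hcont.continuousWithinAt.tendsto
    apply htend.congr'
    filter_upwards [self_mem_nhdsWithin] with a ha
    exact ((key a ha).2.2.2.2).symm
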